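/- arXiv:math/0403544 — 4 statements merged into one kernel-verified Lean document; each statement's English description precedes it below -/
import Mathlib

section
/- Let n ≥ 2 and let T be a continuous field of symmetric bilinear forms on ℝⁿ (i.e. a continuous map assigning to each x ∈ ℝⁿ a symmetric bilinear form T(x) on ℝⁿ) which is rotationally symmetric, meaning T(γx)(γu, γv) = T(x)(u, v) for every γ ∈ SO(n), every x ∈ ℝⁿ and all u, v ∈ ℝⁿ. If T(x) is a nondegenerate bilinear form for every x ∈ ℝⁿ, then either T(x) is positive definite for every x ∈ ℝⁿ, or T(x) is negative definite for every x ∈ ℝⁿ. -/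
/-!
Rotation invariance at the origin makes `T 0` an `SO(n)`-invariant form, hence `c • ⟪·, ·⟫`
since `SO(n)` is transitive on spheres for `n ≥ 2`; replacing `T` by `-T` we may take `c ≥ 0`.
A positive semidefinite nondegenerate symmetric form is positive definite, so the set of points
where `T x` is positive semidefinite (closed) coincides with the set where it is positive
definite (open, by compactness of the unit sphere). It contains `0`, so by connectedness it is
all of `ℝⁿ`.
-/

open Module Submodule Filter Topology

theorem LinearMap.apply_smul_smul_self {R M : Type*} [CommSemiring R] [AddCommMonoid M]
    [Module R M] (B : M →ₗ[R] M →ₗ[R] R) (c : R) (u : M) :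
    B (c • u) (c • u) = c ^ 2 * B u u := by
  simp only [map_smul, LinearMap.smul_apply, smul_eq_mul]
  ring

theorem LinearMap.pos_of_nonneg_of_nondegenerate {M : Type*} [AddCommGroup M] [Module ℝ M]
    (B : M →ₗ[ℝ] M →ₗ[ℝ] ℝ) (hsymm : ∀ u v, B u v = B v u)
    (hnd : ∀ u, (∀ v, B u v = 0) → u = 0) (hB : ∀ u, 0 ≤ B u u) {u : M} (hu : u ≠ 0) :
    0 < B u u := by
  refine (hB u).lt_of_ne fun huu => hu (hnd u fun v => ?_)
  by_contra huv
  -- if `B u u = 0`, the form at `(B v v + 1) • u - B u v • v` is `-(B u v) ^ 2 * (B v v + 2)`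
  have h := hB ((B v v + 1) • u - B u v • v)
  simp only [map_sub, map_smul, LinearMap.sub_apply, LinearMap.smul_apply, smul_eq_mul,
    hsymm v u, ← huu] at h
  nlinarith [mul_self_pos.mpr huv, hB v]

section Continuity

variable {X E : Type*} [TopologicalSpace X] [NormedAddCommGroup E] [NormedSpace ℝ E]
  [FiniteDimensional ℝ E]

theorem continuous_apply_self_of_continuous_apply (T : X → E →ₗ[ℝ] E →ₗ[ℝ] ℝ)
    (hcont : ∀ u v, Continuous fun x => T x u v) :
    Continuous fun p : X × E => T p.1 p.2 p.2 := by
  let Φ : X → E →L[ℝ] E →L[ℝ] ℝ := fun x =>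
    LinearMap.toContinuousLinearMap (LinearMap.toContinuousLinearMap.toLinearMap ∘ₗ T x)
  have hΦ : Continuous Φ :=
    continuous_clm_apply.2 fun u => continuous_clm_apply.2 fun v => hcont u v
  exact ((hΦ.comp continuous_fst).clm_apply continuous_snd).clm_apply continuous_snd

theorem isOpen_setOf_forall_apply_self_pos (T : X → E →ₗ[ℝ] E →ₗ[ℝ] ℝ)
    (hT : Continuous fun p : X × E => T p.1 p.2 p.2) :
    IsOpen {x | ∀ u, u ≠ 0 → 0 < T x u u} := by
  refine isOpen_iff_mem_nhds.2 fun x₀ hx₀ => ?_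
  have hsphere : ∀ᶠ x in 𝓝 x₀, ∀ w ∈ Metric.sphere (0 : E) 1, 0 < T x w w :=
    (isCompact_sphere 0 1).eventually_forall_of_forall_eventually fun w hw =>
      hT.continuousAt.eventually (lt_mem_nhds (hx₀ w (ne_zero_of_mem_unit_sphere ⟨w, hw⟩)))
  filter_upwards [hsphere] with x hx u hu
  have hnorm : ‖u‖ ≠ 0 := norm_ne_zero_iff.2 hu
  have hw : ‖u‖⁻¹ • u ∈ Metric.sphere (0 : E) 1 := by
    simp [norm_smul, hnorm]
  rw [← smul_inv_smul₀ hnorm u, LinearMap.apply_smul_smul_self]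
  exact mul_pos (by positivity) (hx _ hw)

theorem forall_apply_self_pos_of_nonneg_at [PreconnectedSpace X] (T : X → E →ₗ[ℝ] E →ₗ[ℝ] ℝ)
    (hcont : ∀ u v, Continuous fun x => T x u v) (hsymm : ∀ x u v, T x u v = T x v u)
    (hnd : ∀ x u, (∀ v, T x u v = 0) → u = 0) {x₀ : X} (hx₀ : ∀ u, 0 ≤ T x₀ u u) :
    ∀ x u, u ≠ 0 → 0 < T x u u := by
  have hP : {x | ∀ u, 0 ≤ T x u u} = {x | ∀ u, u ≠ 0 → 0 < T x u u} := by
    ext x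
    refine ⟨fun h u hu => (T x).pos_of_nonneg_of_nondegenerate (hsymm x) (hnd x) h hu,
      fun h u => ?_⟩
    rcases eq_or_ne u 0 with rfl | hu
    · simp
    · exact (h u hu).le
  have hclopen : IsClopen {x | ∀ u, u ≠ 0 → 0 < T x u u} := by
    refine ⟨hP ▸ ?_, isOpen_setOf_forall_apply_self_pos T
      (continuous_apply_self_of_continuous_apply T hcont)⟩
    simpa only [Set.ofPred_forall] using
      isClosed_iInter fun u => isClosed_le continuous_const (hcont u u)
  exact Set.eq_univ_iff_forall.1 (hclopen.eq_univ ⟨x₀, hP ▸ hx₀⟩)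

end Continuity

section Rotations

variable {E : Type*} [NormedAddCommGroup E] [InnerProductSpace ℝ E] [FiniteDimensional ℝ E]

theorem det_reflection_orthogonal_span_singleton {a : E} (ha : a ≠ 0) :
    LinearMap.det ((reflection (ℝ ∙ a)ᗮ).toLinearEquiv : E →ₗ[ℝ] E) = -1 := by
  have h := det_reflection (ℝ ∙ a)ᗮ
  rwa [orthogonal_orthogonal, finrank_span_singleton ha, pow_one] at h

theorem exists_linearIsometryEquiv_det_eq_one_apply_eq (hE : 2 ≤ finrank ℝ E) {u w : E}
    (h : ‖u‖ = ‖w‖) :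
    ∃ γ : E ≃ₗᵢ[ℝ] E, LinearMap.det (γ.toLinearEquiv : E →ₗ[ℝ] E) = 1 ∧ γ u = w := by
  rcases eq_or_ne u w with rfl | huw
  · exact ⟨LinearIsometryEquiv.refl ℝ E, LinearMap.det_id, rfl⟩
  -- two hyperplane reflections, each of determinant `-1`: one sends `u` to `w`, one fixes `w`
  obtain ⟨z, hz⟩ : ∃ z : (ℝ ∙ w)ᗮ, z ≠ 0 := by
    have hw : w ≠ 0 := by
      rintro rfl
      exact huw (norm_eq_zero.1 (h.trans norm_zero))
    have hdim := finrank_add_finrank_orthogonal (ℝ ∙ w)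
    rw [finrank_span_singleton hw] at hdim
    have hpos : 0 < finrank ℝ (ℝ ∙ w)ᗮ := by omega
    exact finrank_pos_iff_exists_ne_zero.1 hpos
  have hzw : reflection (ℝ ∙ (z : E))ᗮ w = w := by
    refine reflection_mem_subspace_eq_self (mem_orthogonal_singleton_iff_inner_right.2 ?_)
    rw [real_inner_comm]
    exact mem_orthogonal_singleton_iff_inner_right.1 z.2
  refine ⟨(reflection (ℝ ∙ (u - w))ᗮ).trans (reflection (ℝ ∙ (z : E))ᗮ), ?_, ?_⟩
  · change LinearMap.det (_ ∘ₗ _) = 1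
    rw [LinearMap.det_comp, det_reflection_orthogonal_span_singleton (by simpa using hz),
      det_reflection_orthogonal_span_singleton (sub_ne_zero.2 huw)]
    norm_num
  · rw [LinearIsometryEquiv.trans_apply, reflection_sub h, hzw]

theorem apply_self_eq_norm_sq_mul (hE : 2 ≤ finrank ℝ E) (B : E →ₗ[ℝ] E →ₗ[ℝ] ℝ)
    (hB : ∀ γ : E ≃ₗᵢ[ℝ] E, LinearMap.det (γ.toLinearEquiv : E →ₗ[ℝ] E) = 1 →
      ∀ u v, B (γ u) (γ v) = B u v)
    {e : E} (he : ‖e‖ = 1) (u : E) : B u u = ‖u‖ ^ 2 * B e e := by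
  obtain ⟨γ, hγ, hγu⟩ :=
    exists_linearIsometryEquiv_det_eq_one_apply_eq hE (u := ‖u‖ • e) (w := u)
      (by simp [norm_smul, he])
  have h := hB γ hγ (‖u‖ • e) (‖u‖ • e)
  rwa [hγu, LinearMap.apply_smul_smul_self] at h

end Rotations

/-- A continuous, rotationally symmetric, everywhere nondegenerate field of symmetric
bilinear forms on `ℝⁿ` (`n ≥ 2`) is either everywhere positive definite or everywhere
negative definite. -/
theorem stmt_1 (n : ℕ) (hn : 2 ≤ n)
    (T : EuclideanSpace ℝ (Fin n) →
      EuclideanSpace ℝ (Fin n) →ₗ[ℝ] EuclideanSpace ℝ (Fin n) →ₗ[ℝ] ℝ)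
    (hcont : ∀ u v, Continuous fun x => T x u v)
    (hsymm : ∀ x u v, T x u v = T x v u)
    (hrot : ∀ γ : EuclideanSpace ℝ (Fin n) ≃ₗᵢ[ℝ] EuclideanSpace ℝ (Fin n),
      LinearMap.det (γ.toLinearEquiv : EuclideanSpace ℝ (Fin n) →ₗ[ℝ] EuclideanSpace ℝ (Fin n)) = 1 →
      ∀ x u v, T (γ x) (γ u) (γ v) = T x u v)
    (hnd : ∀ x u, (∀ v, T x u v = 0) → u = 0) :
    (∀ x u, u ≠ 0 → 0 < T x u u) ∨ (∀ x u, u ≠ 0 → T x u u < 0) := by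
  have hE : 2 ≤ finrank ℝ (EuclideanSpace ℝ (Fin n)) := by simpa using hn
  set e := EuclideanSpace.single (⟨0, by omega⟩ : Fin n) (1 : ℝ)
  have he : ‖e‖ = 1 := by simp [e]
  have hT₀ : ∀ u, T 0 u u = ‖u‖ ^ 2 * T 0 e e :=
    apply_self_eq_norm_sq_mul hE (T 0) (fun γ hγ u v => by simpa using hrot γ hγ 0 u v) he
  rcases le_total 0 (T 0 e e) with hpos | hneg
  · left
    exact forall_apply_self_pos_of_nonneg_at T hcont hsymm hnd fun u => by rw [hT₀]; positivity
  · right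
    have h := forall_apply_self_pos_of_nonneg_at (fun x => -T x) (fun u v => (hcont u v).neg)
      (fun x u v => by simp only [LinearMap.neg_apply, hsymm x u v])
      (fun x u hu => hnd x u fun v => by simpa using hu v) (x₀ := 0) fun u => by
        change 0 ≤ -T 0 u u
        rw [hT₀, neg_nonneg]
        exact mul_nonpos_of_nonneg_of_nonpos (sq_nonneg _) hneg
    intro x u hu
    simpa using h x u hu
end

section
/- Let n ≥ 2 be an integer and let φ, ψ : ℝ → ℝ be C^∞ functions with φ(0) = ψ(0) ≠ 0. Suppose w is C^∞ on [0, ε) with w(0) = 0, w'(0) = 0, (w'(t))² = (1/(n−1))·[(n−2)·φ(t)·(w(t)² − 2·w(t)) + t²·φ(t)·ψ(t)] for all t ∈ [0, ε), and w'(t)·φ(0) > 0 for all t ∈ (0, ε). Then the second (one-sided) derivative of w at 0 equals φ(0)/(n−1). -/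
open Set Filter Topology

/-- For a smooth solution `w` of the implicit differential equation (9) with
`w(0) = w'(0) = 0` and `w'(t)·φ(0) > 0` for `t > 0`, the second one-sided derivative
of `w` at `0` equals `φ(0)/(n−1)`. -/
theorem stmt_5 (n : ℕ) (hn : 2 ≤ n) (φ ψ : ℝ → ℝ)
    (hφ : ContDiff ℝ (⊤ : ℕ∞) φ) (hψ : ContDiff ℝ (⊤ : ℕ∞) ψ)
    (h0 : φ 0 = ψ 0) (hne : φ 0 ≠ 0)
    (ε : ℝ) (hε : 0 < ε) (w : ℝ → ℝ)
    (hw : ContDiffOn ℝ (⊤ : ℕ∞) w (Set.Ico 0 ε))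
    (hw0 : w 0 = 0)
    (hw'0 : derivWithin w (Set.Ici 0) 0 = 0)
    (heq : ∀ t ∈ Set.Ico (0 : ℝ) ε,
      (derivWithin w (Set.Ici 0) t) ^ 2 =
        (1 / ((n : ℝ) - 1)) *
          (((n : ℝ) - 2) * φ t * ((w t) ^ 2 - 2 * w t) + t ^ 2 * φ t * ψ t))
    (hpos : ∀ t ∈ Set.Ioo (0 : ℝ) ε, 0 < derivWithin w (Set.Ici 0) t * φ 0) :
    derivWithin (derivWithin w (Set.Ici 0)) (Set.Ici 0) 0 = φ 0 / ((n : ℝ) - 1) := by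
  set v := derivWithin w (Set.Ici 0) with hv
  set v' := derivWithin w (Set.Ico 0 ε) with hv'
  -- sets eventually equal
  have hsets : ∀ t ∈ Set.Ico (0:ℝ) ε, Set.Ici (0:ℝ) =ᶠ[𝓝 t] Set.Ico 0 ε := by
    intro t ht
    filter_upwards [Iio_mem_nhds ht.2] with x hx
    simp only [eq_iff_iff, Set.mem_Ici, Set.mem_Ico]
    exact ⟨fun h => ⟨h, hx⟩, fun h => h.1⟩
  have hvv' : ∀ t ∈ Set.Ico (0:ℝ) ε, v t = v' t := fun t ht =>
    derivWithin_congr_set (hsets t ht)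
  have h0mem : (0:ℝ) ∈ Set.Ico 0 ε := ⟨le_refl 0, hε⟩
  -- v' is differentiable within Ico at 0
  have hv'cd : ContDiffOn ℝ (⊤ : ℕ∞) v' (Set.Ico 0 ε) :=
    hw.derivWithin (uniqueDiffOn_Ico 0 ε) (by simp)
  set L : ℝ := derivWithin v' (Set.Ico 0 ε) 0 with hL
  have hder : HasDerivWithinAt v' L (Set.Ico 0 ε) 0 :=
    ((hv'cd.differentiableOn (by simp)) 0 h0mem).hasDerivWithinAt
  have hderv : HasDerivWithinAt v L (Set.Ici 0) 0 := by
    have := (hder.congr_set (hsets 0 h0mem).symm)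
    refine this.congr_of_eventuallyEq ?_ (hvv' 0 h0mem)
    filter_upwards [nhdsWithin_le_nhds (Iio_mem_nhds hε), self_mem_nhdsWithin]
      with x hx1 hx2
    exact hvv' x ⟨hx2, hx1⟩
  have hgoal : derivWithin v (Set.Ici 0) 0 = L :=
    hderv.derivWithin (uniqueDiffOn_Ici 0 0 Set.self_mem_Ici)
  rw [hgoal]
  -- slope limit: v t / t → L
  have hv0 : v 0 = 0 := hw'0
  have hslope : Tendsto (fun t => v t / t) (𝓝[>] (0:ℝ)) (𝓝 L) := by
    have := hasDerivWithinAt_iff_tendsto_slope.1 hderv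
    rw [show Set.Ici (0:ℝ) \ {0} = Set.Ioi 0 by
      ext x; simp [Set.mem_Ioi, lt_iff_le_and_ne, eq_comm, and_comm]] at this
    refine this.congr fun t => ?_
    simp [slope, hv0, div_eq_inv_mul]
  -- v t = deriv w t for t in Ioo 0 ε, and HasDerivAt
  have hwd : ∀ t ∈ Set.Ioo (0:ℝ) ε, HasDerivAt w (v t) t := by
    intro t ht
    have hmem : Set.Ico (0:ℝ) ε ∈ 𝓝 t :=
      mem_nhds_iff.2 ⟨Set.Ioo 0 ε, Set.Ioo_subset_Ico_self, isOpen_Ioo, ht⟩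
    have hd : DifferentiableAt ℝ w t :=
      (hw.contDiffAt hmem).differentiableAt (by simp)
    have : v t = deriv w t := by
      rw [hv, derivWithin_of_mem_nhds]
      exact mem_nhds_iff.2 ⟨Set.Ioi 0, fun x hx => Set.mem_Ici.2 (le_of_lt (Set.mem_Ioi.1 hx)), isOpen_Ioi, ht.1⟩
    rw [this]; exact hd.hasDerivAt
  -- w t / t^2 → L / 2 by L'Hopital
  have hw2 : Tendsto (fun t => w t / t ^ 2) (𝓝[>] (0:ℝ)) (𝓝 (L / 2)) := by
    apply HasDerivAt.lhopital_zero_right_on_Ioo (f' := v) (g' := fun t => 2 * t) hε hwd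
    · intro x hx
      simpa using (hasDerivAt_pow 2 x)
    · intro x hx
      exact mul_ne_zero two_ne_zero (ne_of_gt hx.1)
    · -- w → 0 along 𝓝[>] 0 : from w t = (w t / t^2) * t^2? circular; use continuity
      have hc : ContinuousWithinAt w (Set.Ico 0 ε) 0 := hw.continuousOn 0 h0mem
      have : Tendsto w (𝓝[Set.Ico 0 ε] 0) (𝓝 0) := by
        simpa [hw0] using hc.tendsto
      refine this.mono_left ?_
      rw [← nhdsWithin_Ioo_eq_nhdsGT hε]
      exact nhdsWithin_mono _ Set.Ioo_subset_Ico_self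
    · have : Tendsto (fun t : ℝ => t ^ 2) (𝓝[>] (0:ℝ)) (𝓝 (0^2)) :=
        ((continuous_pow 2).tendsto 0).mono_left nhdsWithin_le_nhds
      simpa using this
    · have : Tendsto (fun t => v t / t / 2) (𝓝[>] (0:ℝ)) (𝓝 (L / 2)) :=
        hslope.div_const 2
      refine this.congr fun t => ?_
      ring
  -- w → 0 along 𝓝[>]0
  have hwlim : Tendsto w (𝓝[>] (0:ℝ)) (𝓝 0) := by
    have h2 : Tendsto (fun t : ℝ => t ^ 2) (𝓝[>] (0:ℝ)) (𝓝 0) := by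
      have : Tendsto (fun t : ℝ => t ^ 2) (𝓝[>] (0:ℝ)) (𝓝 (0^2)) :=
        ((continuous_pow 2).tendsto 0).mono_left nhdsWithin_le_nhds
      simpa using this
    have := hw2.mul h2
    rw [mul_zero] at this
    refine this.congr' ?_
    filter_upwards [self_mem_nhdsWithin] with t ht
    have : (t:ℝ) ≠ 0 := ne_of_gt ht
    field_simp
  -- limits of φ, ψ
  have hφlim : Tendsto φ (𝓝[>] (0:ℝ)) (𝓝 (φ 0)) :=
    (hφ.continuous.tendsto 0).mono_left nhdsWithin_le_nhds
  have hψlim : Tendsto ψ (𝓝[>] (0:ℝ)) (𝓝 (ψ 0)) :=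
    (hψ.continuous.tendsto 0).mono_left nhdsWithin_le_nhds
  -- the RHS function divided by t^2
  have hF : Tendsto (fun t => (1 / ((n : ℝ) - 1)) *
      (((n : ℝ) - 2) * φ t * (w t * (w t / t ^ 2) - 2 * (w t / t ^ 2)) + φ t * ψ t))
      (𝓝[>] (0:ℝ))
      (𝓝 ((1 / ((n : ℝ) - 1)) *
        (((n : ℝ) - 2) * φ 0 * (0 * (L / 2) - 2 * (L / 2)) + φ 0 * ψ 0))) := by
    exact Tendsto.const_mul _
      ((((tendsto_const_nhds.mul hφlim).mul
        ((hwlim.mul hw2).sub (tendsto_const_nhds.mul hw2))).add (hφlim.mul hψlim)))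
  have hL2 : Tendsto (fun t => (v t / t) ^ 2) (𝓝[>] (0:ℝ)) (𝓝 (L ^ 2)) :=
    hslope.pow 2
  -- eventual equality
  have hEq : ∀ᶠ t in 𝓝[>] (0:ℝ), (v t / t) ^ 2 = (1 / ((n : ℝ) - 1)) *
      (((n : ℝ) - 2) * φ t * (w t * (w t / t ^ 2) - 2 * (w t / t ^ 2)) + φ t * ψ t) := by
    filter_upwards [Ioo_mem_nhdsGT_of_mem ⟨le_refl (0:ℝ), hε⟩] with t ht
    have htne : (t:ℝ) ≠ 0 := ne_of_gt ht.1
    have h := heq t ⟨le_of_lt ht.1, ht.2⟩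
    rw [div_pow]
    rw [h]
    field_simp
  have hkey : L ^ 2 = (1 / ((n : ℝ) - 1)) *
      (((n : ℝ) - 2) * φ 0 * (0 * (L / 2) - 2 * (L / 2)) + φ 0 * ψ 0) :=
    tendsto_nhds_unique (hL2.congr' hEq) hF
  -- sign
  have hsign : 0 ≤ L * φ 0 := by
    refine ge_of_tendsto (hslope.mul_const (φ 0)) ?_
    filter_upwards [Ioo_mem_nhdsGT_of_mem ⟨le_refl (0:ℝ), hε⟩] with t ht
    have := hpos t ht
    calc (0:ℝ) ≤ (v t * φ 0) / t := div_nonneg (le_of_lt this) (le_of_lt ht.1)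
    _ = v t / t * φ 0 := by ring
  -- final algebra
  have hc1 : (1:ℝ) ≤ (n:ℝ) - 1 := by
    have : (2:ℝ) ≤ (n:ℝ) := by exact_mod_cast hn
    linarith
  have hcne : ((n:ℝ) - 1) ≠ 0 := by linarith
  have hfac : (((n:ℝ) - 1) * L - φ 0) * (L + φ 0) = 0 := by
    rw [← h0] at hkey
    field_simp at hkey
    nlinarith [hkey]
  rcases mul_eq_zero.1 hfac with h | h
  · rw [eq_div_iff hcne]
    linarith
  · exfalso
    have hLe : L = -φ 0 := by linarith
    rw [hLe] at hsign
    exact hne (mul_self_eq_zero.1 (le_antisymm (by nlinarith) (mul_self_nonneg _)))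
end

section
/- Let n ≥ 2 be an integer, let φ : ℝ → ℝ be a C^∞ function with φ(0) ≠ 0, and let w be a function that is C^∞ on [0, ε₀) for some ε₀ > 0 with w(0) = 0, w'(0) = 0 and w''(0) = φ(0)/(n−1). Then there exist ε > 0 and a function r which is C^∞ on [0, ε) such that r(0) = 0, r'(0) = 1, and (n−1)·w'(t)·r'(t) = φ(t)·r(t) for all t ∈ [0, ε). -/
open Set Filter Topology
open scoped NNReal ENNReal

/-- The Hadamard-type integral `∫₀¹ s^k f(s t) ds`. -/
noncomputable def hadT (k : ℕ) (f : ℝ → ℝ) (t : ℝ) : ℝ :=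
  ∫ s in (0:ℝ)..1, s ^ k * f (s * t)

lemma clamp_mem' {b : ℝ} (hb : 0 ≤ b) (x : ℝ) : max 0 (min x b) ∈ Icc 0 b :=
  ⟨le_max_left _ _, max_le hb (min_le_right _ _)⟩

lemma clamp_eq' {b y : ℝ} (h : y ∈ Icc 0 b) : max 0 (min y b) = y := by
  rw [min_eq_left h.2, max_eq_right h.1]

lemma cont_clamp {g : ℝ → ℝ} {a b : ℝ} (hg : ContinuousOn g (Ico 0 a)) (hb : 0 ≤ b)
    (hba : b < a) : Continuous (fun x => g (max 0 (min x b))) :=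
  hg.comp_continuous (by fun_prop)
    (fun x => ⟨(clamp_mem' hb x).1, lt_of_le_of_lt (clamp_mem' hb x).2 hba⟩)

lemma top_ne_zero_wt : ((⊤ : ℕ∞) : WithTop ℕ∞) ≠ 0 := by
  simp

lemma top_add_one_wt : ((⊤ : ℕ∞) : WithTop ℕ∞) + 1 ≤ ((⊤ : ℕ∞) : WithTop ℕ∞) := le_of_eq rfl

lemma hadT_integrand_cont {a : ℝ} {g : ℝ → ℝ} (hg : ContinuousOn g (Ico 0 a)) (m : ℕ) {x : ℝ}
    (hx : x ∈ Ico 0 a) : ContinuousOn (fun s => s ^ m * g (s * x)) (uIcc 0 1) := by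
  rw [uIcc_of_le zero_le_one]
  exact (continuous_pow m).continuousOn.mul (hg.comp (continuousOn_id.mul continuousOn_const)
    (fun s hs => ⟨mul_nonneg hs.1 hx.1, lt_of_le_of_lt (mul_le_of_le_one_left hx.1 hs.2) hx.2⟩))

lemma hadT_clamp_eq {f : ℝ → ℝ} (k : ℕ) {b x : ℝ} (hx : x ∈ Icc 0 b) :
    hadT k f x = hadT k (fun y => f (max 0 (min y b))) x := by
  unfold hadT
  apply intervalIntegral.integral_congr
  intro s hs
  rw [uIcc_of_le zero_le_one] at hs
  simp only
  rw [clamp_eq' ⟨mul_nonneg hs.1 hx.1, (mul_le_of_le_one_left hx.1 hs.2).trans hx.2⟩]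

lemma hadT_cont {a : ℝ} {f : ℝ → ℝ} (k : ℕ) (hf : ContinuousOn f (Ico 0 a)) :
    ContinuousOn (hadT k f) (Ico 0 a) := by
  intro t ht
  obtain ⟨b, htb, hba⟩ := exists_between ht.2
  have hb : 0 ≤ b := ht.1.trans htb.le
  have hc := cont_clamp hf hb hba
  have hT : Continuous (hadT k (fun x => f (max 0 (min x b)))) := by
    unfold hadT
    exact intervalIntegral.continuous_parametric_intervalIntegral_of_continuous'
      (f := fun x s => s ^ k * f (max 0 (min (s * x) b)))
      (show Continuous (fun p : ℝ × ℝ => p.2 ^ k * f (max 0 (min (p.2 * p.1) b))) from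
        (continuous_snd.pow k).mul (hc.comp (continuous_snd.mul continuous_fst))) 0 1
  refine (hT.continuousAt.continuousWithinAt).congr_of_eventuallyEq ?_ (hadT_clamp_eq k ⟨ht.1, htb.le⟩)
  filter_upwards [self_mem_nhdsWithin, mem_nhdsWithin_of_mem_nhds (Iio_mem_nhds htb)] with x hx hxb
  exact hadT_clamp_eq k ⟨hx.1, le_of_lt hxb⟩

lemma primitive_hasDeriv {a : ℝ} {g : ℝ → ℝ} (hg : ContinuousOn g (Ico 0 a)) {t : ℝ}
    (ht : t ∈ Ico 0 a) :
    HasDerivWithinAt (fun x => ∫ y in (0:ℝ)..x, g y) (g t) (Ico 0 a) t := by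
  obtain ⟨b, htb, hba⟩ := exists_between ht.2
  have hb : 0 ≤ b := ht.1.trans htb.le
  have hc := cont_clamp hg hb hba
  have hD := ((hc.integral_hasStrictDerivAt 0 t).hasDerivAt).hasDerivWithinAt (s := Ico 0 a)
  have heq : ∀ x ∈ Icc 0 b, (∫ y in (0:ℝ)..x, g y) = ∫ y in (0:ℝ)..x, g (max 0 (min y b)) := by
    intro x hx
    apply intervalIntegral.integral_congr
    intro y hy
    rw [uIcc_of_le hx.1] at hy
    show g y = g (max 0 (min y b))
    rw [clamp_eq' ⟨hy.1, hy.2.trans hx.2⟩]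
  rw [show g t = g (max 0 (min t b)) by rw [clamp_eq' ⟨ht.1, htb.le⟩]]
  refine hD.congr_of_eventuallyEq ?_ (heq t ⟨ht.1, htb.le⟩)
  filter_upwards [self_mem_nhdsWithin, mem_nhdsWithin_of_mem_nhds (Iio_mem_nhds htb)] with x hx hxb
  exact heq x ⟨hx.1, le_of_lt hxb⟩

lemma interior_hasDerivAt {a : ℝ} {f : ℝ → ℝ} (hf : ContDiffOn ℝ (⊤ : ℕ∞) f (Ico 0 a)) {y : ℝ}
    (hy : y ∈ Ioo 0 a) : HasDerivAt f (derivWithin f (Ico 0 a) y) y := by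
  have hn : Ico 0 a ∈ 𝓝 y := Ico_mem_nhds hy.1 hy.2
  have hd := (hf.differentiableOn top_ne_zero_wt y (Ioo_subset_Ico_self hy)).differentiableAt hn
  rw [derivWithin_of_mem_nhds hn]
  exact hd.hasDerivAt

lemma hadT_hasDeriv {a : ℝ} {f : ℝ → ℝ} (k : ℕ) (hf : ContDiffOn ℝ (⊤ : ℕ∞) f (Ico 0 a))
    {t : ℝ} (ht : t ∈ Ico 0 a) :
    HasDerivWithinAt (hadT k f) (hadT (k+1) (derivWithin f (Ico 0 a)) t) (Ico 0 a) t := by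
  have hDf : ContinuousOn (derivWithin f (Ico 0 a)) (Ico 0 a) :=
    (hf.derivWithin (uniqueDiffOn_Ico 0 a) top_add_one_wt).continuousOn
  have hpos : ∀ t ∈ Ioo 0 a,
      HasDerivAt (hadT k f) (hadT (k+1) (derivWithin f (Ico 0 a)) t) t := by
    intro t ht
    set Df := derivWithin f (Ico 0 a) with hDfdef
    set δ := min (t/2) ((a - t)/2) with hδ
    have hδ0 : 0 < δ := lt_min (by linarith [ht.1]) (by linarith [ht.2])
    have hδ1 : δ ≤ t/2 := min_le_left _ _
    have hδ2 : δ ≤ (a - t)/2 := min_le_right _ _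
    obtain ⟨C, hC⟩ := (isCompact_Icc (a := (0:ℝ)) (b := (t + a)/2)).exists_bound_of_continuousOn
      (hDf.mono (Icc_subset_Ico_right (by linarith [ht.2])))
    have hball : ∀ x ∈ Metric.ball t δ, 0 < x ∧ x < (t + a)/2 := by
      intro x hx
      rw [Metric.mem_ball, Real.dist_eq, abs_lt] at hx
      constructor <;> linarith [hx.1, hx.2]
    have key := intervalIntegral.hasDerivAt_integral_of_dominated_loc_of_deriv_le
      (μ := MeasureTheory.volume) (a := 0) (b := 1)
      (F := fun x s => s ^ k * f (s * x)) (F' := fun x s => s ^ (k+1) * Df (s * x))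
      (x₀ := t) (bound := fun _ => C) (s := Metric.ball t δ) (Metric.ball_mem_nhds t hδ0)
      (by
        filter_upwards [Ioo_mem_nhds ht.1 ht.2] with x hx
        exact ((hadT_integrand_cont hf.continuousOn k (Ioo_subset_Ico_self hx)).mono
          uIoc_subset_uIcc).aestronglyMeasurable measurableSet_uIoc)
      ((hadT_integrand_cont hf.continuousOn k (Ioo_subset_Ico_self ht)).intervalIntegrable)
      (((hadT_integrand_cont hDf (k+1) (Ioo_subset_Ico_self ht)).mono
          uIoc_subset_uIcc).aestronglyMeasurable measurableSet_uIoc)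
      (Filter.Eventually.of_forall (fun s hs x hx => by
        rw [uIoc_of_le zero_le_one] at hs
        obtain ⟨hx1, hx2⟩ := hball x hx
        have hs1 : ‖s ^ (k+1)‖ ≤ 1 := by
          rw [norm_pow, Real.norm_eq_abs, abs_of_pos hs.1]
          exact pow_le_one₀ hs.1.le hs.2
        have hmem : s * x ∈ Icc 0 ((t + a)/2) :=
          ⟨mul_nonneg hs.1.le hx1.le, (mul_le_of_le_one_left hx1.le hs.2).trans hx2.le⟩
        show ‖s ^ (k+1) * Df (s * x)‖ ≤ C
        rw [norm_mul]
        exact (mul_le_of_le_one_left (norm_nonneg _) hs1).trans (hC _ hmem)))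
      intervalIntegrable_const
      (Filter.Eventually.of_forall (fun s hs x hx => by
        rw [uIoc_of_le zero_le_one] at hs
        obtain ⟨hx1, hx2⟩ := hball x hx
        have hm : s * x ∈ Ioo 0 a :=
          ⟨mul_pos hs.1 hx1, lt_of_le_of_lt (mul_le_of_le_one_left hx1.le hs.2)
            (by linarith [ht.2])⟩
        have := ((interior_hasDerivAt hf hm).comp x ((hasDerivAt_id x).const_mul s)).const_mul
          (s ^ k)
        refine this.congr_deriv ?_
        rw [hDfdef]
        ring))
    exact key.2
  rcases ht.1.eq_or_lt with h | h
  · subst h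
    have ha : 0 < a := ht.2
    have hc1 : Tendsto (hadT (k+1) (derivWithin f (Ico 0 a))) (𝓝[>] 0)
        (𝓝 (hadT (k+1) (derivWithin f (Ico 0 a)) 0)) := by
      have := (hadT_cont (k+1) hDf 0 ⟨le_rfl, ha⟩).mono (Ioo_subset_Ico_self (a := (0:ℝ)) (b := a))
      rw [ContinuousWithinAt, nhdsWithin_Ioo_eq_nhdsGT ha] at this
      exact this
    have h0 := hasDerivWithinAt_Ici_of_tendsto_deriv (s := Ioo 0 a)
      (fun x hx => (hpos x hx).differentiableAt.differentiableWithinAt)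
      ((hadT_cont k hf.continuousOn 0 ⟨le_rfl, ha⟩).mono Ioo_subset_Ico_self)
      (Ioo_mem_nhdsGT ha)
      (hc1.congr' (by
        filter_upwards [Ioo_mem_nhdsGT ha] with x hx
        exact (hpos x hx).deriv.symm))
    exact h0.mono Ico_subset_Ici_self
  · exact (hpos t ⟨h, ht.2⟩).hasDerivWithinAt

lemma hadT_smooth {a : ℝ} {f : ℝ → ℝ} (k : ℕ) (hf : ContDiffOn ℝ (⊤ : ℕ∞) f (Ico 0 a)) :
    ContDiffOn ℝ (⊤ : ℕ∞) (hadT k f) (Ico 0 a) := by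
  have hmain : ∀ m : ℕ, ∀ k : ℕ, ∀ f : ℝ → ℝ, ContDiffOn ℝ (⊤ : ℕ∞) f (Ico 0 a) →
      ContDiffOn ℝ m (hadT k f) (Ico 0 a) := by
    intro m
    induction m with
    | zero =>
      intro k f hf
      rw [Nat.cast_zero, contDiffOn_zero]
      exact hadT_cont k hf.continuousOn
    | succ m ih =>
      intro k f hf
      have hDf : ContDiffOn ℝ (⊤ : ℕ∞) (derivWithin f (Ico 0 a)) (Ico 0 a) :=
        hf.derivWithin (uniqueDiffOn_Ico 0 a) top_add_one_wt
      rw [show ((m+1 : ℕ) : WithTop ℕ∞) = (m : WithTop ℕ∞) + 1 by push_cast; rfl,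
        contDiffOn_succ_iff_derivWithin (uniqueDiffOn_Ico 0 a)]
      refine ⟨fun x hx => (hadT_hasDeriv k hf hx).differentiableWithinAt, by simp, ?_⟩
      exact (ih (k+1) _ hDf).congr
        (fun x hx => (hadT_hasDeriv k hf hx).derivWithin (uniqueDiffOn_Ico 0 a x hx))
  exact contDiffOn_infty.2 (fun m => hmain m k f hf)

lemma hadamard_eq {a : ℝ} {f : ℝ → ℝ} (hf : ContDiffOn ℝ (⊤ : ℕ∞) f (Ico 0 a)) {t : ℝ}
    (ht : t ∈ Ico 0 a) : f t = f 0 + t * hadT 0 (derivWithin f (Ico 0 a)) t := by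
  have hDf : ContinuousOn (derivWithin f (Ico 0 a)) (Ico 0 a) :=
    (hf.derivWithin (uniqueDiffOn_Ico 0 a) top_add_one_wt).continuousOn
  rcases ht.1.eq_or_lt with h | h
  · subst h; simp
  · have hint : ∫ x in (0:ℝ)..t, derivWithin f (Ico 0 a) x = f t - f 0 := by
      apply intervalIntegral.integral_eq_sub_of_hasDerivAt_of_le ht.1
        (hf.continuousOn.mono (Icc_subset_Ico_right ht.2))
      · intro y hy
        exact interior_hasDerivAt hf ⟨hy.1, hy.2.trans ht.2⟩
      · apply ContinuousOn.intervalIntegrable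
        rw [uIcc_of_le ht.1]
        exact hDf.mono (Icc_subset_Ico_right ht.2)
    unfold hadT
    simp only [pow_zero, one_mul]
    rw [intervalIntegral.integral_comp_mul_right _ h.ne', zero_mul, one_mul, hint, smul_eq_mul,
      ← mul_assoc, mul_inv_cancel₀ h.ne', one_mul]
    ring

/-- Existence of a smooth solution `r` of the singular differential equation (10)
`(n−1)·w'·r' = φ·r` with `r(0) = 0`, `r'(0) = 1`. -/
theorem stmt_7 (n : ℕ) (hn : 2 ≤ n) (φ : ℝ → ℝ)
    (hφ : ContDiff ℝ (⊤ : ℕ∞) φ) (hφ0 : φ 0 ≠ 0)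
    (ε₀ : ℝ) (hε₀ : 0 < ε₀) (w : ℝ → ℝ)
    (hw : ContDiffOn ℝ (⊤ : ℕ∞) w (Set.Ico 0 ε₀))
    (hw0 : w 0 = 0)
    (hw'0 : derivWithin w (Set.Ici 0) 0 = 0)
    (hw''0 : derivWithin (derivWithin w (Set.Ici 0)) (Set.Ici 0) 0 = φ 0 / ((n : ℝ) - 1)) :
    ∃ ε : ℝ, 0 < ε ∧ ∃ r : ℝ → ℝ,
      ContDiffOn ℝ (⊤ : ℕ∞) r (Set.Ico 0 ε) ∧
      r 0 = 0 ∧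
      derivWithin r (Set.Ici 0) 0 = 1 ∧
      ∀ t ∈ Set.Ico (0 : ℝ) ε,
        ((n : ℝ) - 1) * derivWithin w (Set.Ici 0) t * derivWithin r (Set.Ici 0) t =
          φ t * r t := by
  have h0mem : (0:ℝ) ∈ Set.Ico (0:ℝ) ε₀ := ⟨le_refl _, hε₀⟩
  set c : ℝ := (n:ℝ) - 1 with hc
  have hcpos : (0:ℝ) < c := by
    have : (2:ℝ) ≤ n := by exact_mod_cast hn
    rw [hc]; linarith
  have hc0 : c ≠ 0 := ne_of_gt hcpos
  have hU := uniqueDiffOn_Ico (0:ℝ) ε₀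
  set Dw := derivWithin w (Ico 0 ε₀) with hDwdef
  have hDw : ContDiffOn ℝ (⊤ : ℕ∞) Dw (Ico 0 ε₀) := hw.derivWithin hU top_add_one_wt
  have hkey : ∀ t ∈ Ico (0:ℝ) ε₀, derivWithin w (Ici 0) t = Dw t := by
    intro t ht
    rw [hDwdef, ← Set.Ici_inter_Iio, derivWithin_inter (Iio_mem_nhds ht.2)]
  have hw1 : Dw 0 = 0 := (hkey 0 h0mem).symm.trans hw'0
  set Ψ : ℝ → ℝ := fun t => c * Dw t with hΨdef
  have hΨ : ContDiffOn ℝ (⊤ : ℕ∞) Ψ (Ico 0 ε₀) := contDiffOn_const.mul hDw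
  have hΨ0 : Ψ 0 = 0 := by simp [hΨdef, hw1]
  set DΨ := derivWithin Ψ (Ico 0 ε₀) with hDΨdef
  have hDΨ : ContDiffOn ℝ (⊤ : ℕ∞) DΨ (Ico 0 ε₀) := hΨ.derivWithin hU top_add_one_wt
  have hDΨ0 : DΨ 0 = φ 0 := by
    have hfe : derivWithin w (Set.Ici 0) =ᶠ[𝓝[Set.Ici 0] 0] Dw := by
      have hmem : Set.Ico (0:ℝ) ε₀ ∈ 𝓝[Set.Ici 0] 0 := by
        rw [← Set.Ici_inter_Iio]
        exact inter_mem self_mem_nhdsWithin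
          (mem_nhdsWithin_of_mem_nhds (Iio_mem_nhds hε₀))
      filter_upwards [hmem] with y hy using hkey y hy
    have e1 : derivWithin (derivWithin w (Ici 0)) (Ici 0) 0 = derivWithin Dw (Ici 0) 0 :=
      hfe.derivWithin_eq (hkey 0 h0mem)
    have e2 : derivWithin Dw (Ico 0 ε₀) 0 = derivWithin Dw (Ici 0) 0 := by
      rw [← Set.Ici_inter_Iio, derivWithin_inter (Iio_mem_nhds hε₀)]
    have e3 : DΨ 0 = c * derivWithin Dw (Ico 0 ε₀) 0 :=
      (((hDw.differentiableOn top_ne_zero_wt 0 h0mem).hasDerivWithinAt).const_mul c).derivWithin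
        (hU 0 h0mem)
    rw [e3, e2, ← e1, hw''0]
    field_simp
  set G := hadT 0 DΨ with hGdef
  have hG : ContDiffOn ℝ (⊤ : ℕ∞) G (Ico 0 ε₀) := hadT_smooth 0 hDΨ
  have hG0 : G 0 = φ 0 := by simp [hGdef, hadT, hDΨ0]
  have hGmul : ∀ t ∈ Ico (0:ℝ) ε₀, Ψ t = t * G t := by
    intro t ht
    have := hadamard_eq hΨ ht
    rw [hΨ0, zero_add] at this
    exact this
  set η : ℝ → ℝ := fun t => φ t - DΨ t with hηdef
  have hη : ContDiffOn ℝ (⊤ : ℕ∞) η (Ico 0 ε₀) := hφ.contDiffOn.sub hDΨ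
  have hη0 : η 0 = 0 := by simp [hηdef, hDΨ0]
  set H := hadT 0 (derivWithin η (Ico 0 ε₀)) with hHdef
  have hH : ContDiffOn ℝ (⊤ : ℕ∞) H (Ico 0 ε₀) :=
    hadT_smooth 0 (hη.derivWithin hU top_add_one_wt)
  have hHmul : ∀ t ∈ Ico (0:ℝ) ε₀, η t = t * H t := by
    intro t ht
    have := hadamard_eq hη ht
    rw [hη0, zero_add] at this
    exact this
  have hGc : ContinuousWithinAt G (Ico 0 ε₀) 0 := hG.continuousOn 0 h0mem
  have hev : ∀ᶠ x in 𝓝[Ico 0 ε₀] 0, G x ≠ 0 := hGc.eventually_ne (by rw [hG0]; exact hφ0)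
  obtain ⟨δ, hδ0, hδ⟩ := Metric.mem_nhdsWithin_iff.1 hev
  set ε := min δ ε₀ with hεdef
  have hεpos : 0 < ε := lt_min hδ0 hε₀
  have hsub : Ico (0:ℝ) ε ⊆ Ico 0 ε₀ := Ico_subset_Ico_right (min_le_right _ _)
  have hGne : ∀ t ∈ Ico (0:ℝ) ε, G t ≠ 0 := fun t ht =>
    hδ ⟨by
      rw [Metric.mem_ball, Real.dist_eq, sub_zero, abs_of_nonneg ht.1]
      exact lt_of_lt_of_le ht.2 (min_le_left _ _), hsub ht⟩
  set g : ℝ → ℝ := fun t => H t / G t with hgdef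
  have hg : ContDiffOn ℝ (⊤ : ℕ∞) g (Ico 0 ε) := (hH.mono hsub).div (hG.mono hsub) hGne
  set S : ℝ → ℝ := fun t => ∫ x in (0:ℝ)..t, g x with hSdef
  have hSd : ∀ t ∈ Ico (0:ℝ) ε, HasDerivWithinAt S (g t) (Ico 0 ε) t :=
    fun t ht => primitive_hasDeriv hg.continuousOn ht
  have hUε := uniqueDiffOn_Ico (0:ℝ) ε
  have hS : ContDiffOn ℝ (⊤ : ℕ∞) S (Ico 0 ε) := by
    rw [contDiffOn_infty_iff_derivWithin hUε]
    exact ⟨fun t ht => (hSd t ht).differentiableWithinAt,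
      hg.congr (fun t ht => (hSd t ht).derivWithin (hUε t ht))⟩
  have hS0 : S 0 = 0 := by simp [hSdef]
  set u : ℝ → ℝ := fun t => Real.exp (S t) / φ 0 with hudef
  set r : ℝ → ℝ := fun t => Ψ t * u t with hrdef
  have hu0 : u 0 = 1 / φ 0 := by rw [hudef]; simp [hS0]
  have hder : ∀ t ∈ Ico (0:ℝ) ε,
      HasDerivWithinAt r (DΨ t * u t + Ψ t * (u t * g t)) (Ico 0 ε) t := by
    intro t ht
    have hΨd : HasDerivWithinAt Ψ (DΨ t) (Ico 0 ε) t :=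
      ((hΨ.differentiableOn top_ne_zero_wt t (hsub ht)).hasDerivWithinAt).mono hsub
    have hu' : HasDerivWithinAt u (u t * g t) (Ico 0 ε) t := by
      have := ((hSd t ht).exp).div_const (φ 0)
      rw [show u t * g t = Real.exp (S t) * g t / φ 0 by rw [hudef]; ring]
      exact this
    exact hΨd.mul hu'
  have hr' : ∀ t ∈ Ico (0:ℝ) ε,
      derivWithin r (Ici 0) t = DΨ t * u t + Ψ t * (u t * g t) := by
    intro t ht
    rw [← (hder t ht).derivWithin (hUε t ht), ← Set.Ici_inter_Iio,
      derivWithin_inter (Iio_mem_nhds ht.2)]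
  refine ⟨ε, hεpos, r, ?_, ?_, ?_, ?_⟩
  · exact (hΨ.mono hsub).mul ((Real.contDiff_exp.comp_contDiffOn hS).div_const _)
  · simp [hrdef, hΨ0]
  · rw [hr' 0 ⟨le_rfl, hεpos⟩, hDΨ0, hΨ0, hu0]
    simp [hφ0]
  · intro t ht
    rw [hkey t (hsub ht), hr' t ht]
    have hGt := hGne t ht
    have hkey2 : Ψ t * g t = φ t - DΨ t := by
      have e1 : Ψ t * g t = t * G t * (H t / G t) := by
        show Ψ t * (H t / G t) = _
        rw [hGmul t (hsub ht)]
      have e2 : t * G t * (H t / G t) = t * H t := by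
        field_simp
      rw [e1, e2, ← hHmul t (hsub ht), hηdef]
    have hΨt' : c * Dw t = Ψ t := rfl
    have hrt : r t = Ψ t * u t := rfl
    rw [hrt, hΨt']
    linear_combination (Ψ t * u t) * hkey2
end

section
/- Let n ≥ 2 be an integer, let φ : ℝ → ℝ be a C^∞ function with φ(0) ≠ 0, and let w be C^∞ on [0, ε) with w(0) = 0, w'(0) = 0, w''(0) = φ(0)/(n−1) and w'(t) ≠ 0 for all t ∈ (0, ε). Suppose f is C^∞ on [0, ε) with f(0) = 0 and (n−1)·w'(t)·f'(t) + w(t)·φ(t) = 0 on [0, ε). Then the function s ↦ (φ(s)/(n−1))·(w(s)/w'(s)), defined for s ∈ (0, ε), has a continuous extension H to [0, ε) with H(0) = 0, and f(t) = −∫₀ᵗ H(s) ds for all t ∈ [0, ε). -/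
/-- The solution `f` of the singular differential equation (12) is given by the closed
formula `f(t) = −∫₀ᵗ H(s) ds` where `H` is the continuous extension to `[0, ε)` of
`s ↦ (φ(s)/(n−1))·(w(s)/w'(s))`, with `H(0) = 0`. -/
theorem stmt_10 (n : ℕ) (hn : 2 ≤ n) (φ : ℝ → ℝ)
    (hφ : ContDiff ℝ (⊤ : ℕ∞) φ) (hφ0 : φ 0 ≠ 0)
    (ε : ℝ) (hε : 0 < ε) (w : ℝ → ℝ)
    (hw : ContDiffOn ℝ (⊤ : ℕ∞) w (Set.Ico 0 ε))
    (hw0 : w 0 = 0)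
    (hw'0 : derivWithin w (Set.Ici 0) 0 = 0)
    (hw''0 : derivWithin (derivWithin w (Set.Ici 0)) (Set.Ici 0) 0 = φ 0 / ((n : ℝ) - 1))
    (hw' : ∀ t ∈ Set.Ioo (0 : ℝ) ε, derivWithin w (Set.Ici 0) t ≠ 0)
    (f : ℝ → ℝ)
    (hf : ContDiffOn ℝ (⊤ : ℕ∞) f (Set.Ico 0 ε))
    (hf0 : f 0 = 0)
    (hode : ∀ t ∈ Set.Ico (0 : ℝ) ε,
      ((n : ℝ) - 1) * derivWithin w (Set.Ici 0) t * derivWithin f (Set.Ici 0) t +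
        w t * φ t = 0) :
    ∃ H : ℝ → ℝ,
      ContinuousOn H (Set.Ico 0 ε) ∧
      (∀ s ∈ Set.Ioo (0 : ℝ) ε,
        H s = (φ s / ((n : ℝ) - 1)) * (w s / derivWithin w (Set.Ici 0) s)) ∧
      H 0 = 0 ∧
      ∀ t ∈ Set.Ico (0 : ℝ) ε, f t = -∫ s in (0 : ℝ)..t, H s := by
  have hn1 : ((n : ℝ) - 1) ≠ 0 := by
    have : (2 : ℝ) ≤ (n : ℝ) := by exact_mod_cast hn
    linarith
  set g : ℝ → ℝ := derivWithin w (Set.Ici 0) with hg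
  set H : ℝ → ℝ := fun s => -derivWithin f (Set.Ici 0) s with hH
  have hu : UniqueDiffOn ℝ (Set.Ico (0:ℝ) ε) := uniqueDiffOn_Ico 0 ε
  -- set congruence near points of Ico
  have hsetcongr : ∀ t ∈ Set.Ico (0:ℝ) ε, Set.Ico (0:ℝ) ε =ᶠ[nhds t] Set.Ici 0 := by
    intro t ht
    have h1 : Set.Iio ε ∈ nhds t := Iio_mem_nhds ht.2
    rw [Filter.eventuallyEq_set]
    filter_upwards [h1] with x hx
    simp only [Set.mem_Ico, Set.mem_Ici, Set.mem_Iio] at *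
    exact ⟨fun h => h.1, fun h => ⟨h, hx⟩⟩
  have hdf_eq : ∀ t ∈ Set.Ico (0:ℝ) ε,
      derivWithin f (Set.Ici 0) t = derivWithin f (Set.Ico 0 ε) t := fun t ht =>
    (derivWithin_congr_set (hsetcongr t ht)).symm
  have hdw_eq : ∀ t ∈ Set.Ico (0:ℝ) ε,
      g t = derivWithin w (Set.Ico 0 ε) t := fun t ht =>
    (derivWithin_congr_set (hsetcongr t ht)).symm
  -- continuity of H
  have hfd : ContDiffOn ℝ (⊤ : ℕ∞) (derivWithin f (Set.Ico 0 ε)) (Set.Ico 0 ε) :=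
    hf.derivWithin hu (by simp)
  have hHc : ContinuousOn H (Set.Ico 0 ε) := by
    have := hfd.continuousOn.neg
    exact this.congr fun t ht => by simp [hH, hdf_eq t ht]
  -- formula for H on Ioo
  have hHform : ∀ s ∈ Set.Ioo (0:ℝ) ε,
      H s = (φ s / ((n : ℝ) - 1)) * (w s / g s) := by
    intro s hs
    have h1 := hode s ⟨hs.1.le, hs.2⟩
    have h2 := hw' s hs
    simp only [hH]
    field_simp
    nlinarith [h1]
  refine ⟨H, hHc, hHform, ?_, ?_⟩
  · -- H 0 = 0
    haveI : (nhdsWithin (0:ℝ) (Set.Ioo 0 ε)).NeBot := by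
      rw [nhdsWithin_Ioo_eq_nhdsGT hε]; infer_instance
    have hsub : Set.Ioo (0:ℝ) ε ⊆ Set.Ici 0 \ {0} := fun x hx =>
      ⟨hx.1.le, ne_of_gt hx.1⟩
    -- slope of w tends to 0
    have hwdiff : DifferentiableWithinAt ℝ w (Set.Ici 0) 0 := by
      have : DifferentiableWithinAt ℝ w (Set.Ico 0 ε) 0 :=
        (hw.differentiableOn (by simp)) 0 ⟨le_refl 0, hε⟩
      exact (differentiableWithinAt_congr_set (hsetcongr 0 ⟨le_refl 0, hε⟩)).mp this
    have hw'0' : derivWithin w (Set.Ici 0) 0 = 0 := hw'0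
    have hwderiv : HasDerivWithinAt w 0 (Set.Ici 0) 0 := by
      have := hwdiff.hasDerivWithinAt
      rwa [hw'0'] at this
    have hslope_w : Filter.Tendsto (fun s => w s / s)
        (nhdsWithin 0 (Set.Ioo 0 ε)) (nhds 0) := by
      have h := hasDerivWithinAt_iff_tendsto_slope.mp hwderiv
      have h2 := h.mono_left (nhdsWithin_mono 0 hsub)
      refine h2.congr' ?_
      filter_upwards [self_mem_nhdsWithin] with x hx
      rw [slope_def_field, hw0]
      simp only [sub_zero]
    -- slope of g tends to c
    set c : ℝ := φ 0 / ((n : ℝ) - 1) with hc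
    have hc0 : c ≠ 0 := div_ne_zero hφ0 hn1
    have hgdiff : DifferentiableWithinAt ℝ g (Set.Ici 0) 0 := by
      have h1 : DifferentiableWithinAt ℝ (derivWithin w (Set.Ico 0 ε)) (Set.Ico 0 ε) 0 :=
        ((hw.derivWithin (m := 1) hu (by exact (WithTop.coe_le_coe.mpr le_top : ((1 + 1 : ℕ∞) : WithTop ℕ∞) ≤ ((⊤ : ℕ∞) : WithTop ℕ∞)))).differentiableOn one_ne_zero) 0 ⟨le_refl 0, hε⟩
      have h2 : DifferentiableWithinAt ℝ g (Set.Ico 0 ε) 0 := by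
        refine h1.congr (fun x hx => (hdw_eq x hx)) (hdw_eq 0 ⟨le_refl 0, hε⟩)
      exact (differentiableWithinAt_congr_set (hsetcongr 0 ⟨le_refl 0, hε⟩)).mp h2
    have hgderiv : HasDerivWithinAt g c (Set.Ici 0) 0 := by
      have := hgdiff.hasDerivWithinAt
      rwa [hw''0] at this
    have hslope_g : Filter.Tendsto (fun s => g s / s)
        (nhdsWithin 0 (Set.Ioo 0 ε)) (nhds c) := by
      have h := hasDerivWithinAt_iff_tendsto_slope.mp hgderiv
      have h2 := h.mono_left (nhdsWithin_mono 0 hsub)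
      refine h2.congr' ?_
      filter_upwards [self_mem_nhdsWithin] with x hx
      rw [slope_def_field]
      simp [hw'0]
    -- w/g tends to 0
    have hwg : Filter.Tendsto (fun s => w s / g s)
        (nhdsWithin 0 (Set.Ioo 0 ε)) (nhds 0) := by
      have h := hslope_w.div hslope_g hc0
      rw [zero_div] at h
      refine h.congr' ?_
      filter_upwards [self_mem_nhdsWithin] with x hx
      simp only [Pi.div_apply]
      rw [div_div_div_cancel_right₀ (ne_of_gt hx.1)]
    -- formula tends to 0
    have hΦ : Filter.Tendsto (fun s => (φ s / ((n : ℝ) - 1)) * (w s / g s))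
        (nhdsWithin 0 (Set.Ioo 0 ε)) (nhds 0) := by
      have hφt : Filter.Tendsto (fun s => φ s / ((n : ℝ) - 1))
          (nhdsWithin 0 (Set.Ioo 0 ε)) (nhds (φ 0 / ((n : ℝ) - 1))) :=
        ((hφ.continuous.tendsto 0).div_const _).mono_left nhdsWithin_le_nhds
      have := hφt.mul hwg
      rwa [mul_zero] at this
    -- H tends to H 0
    have hHt : Filter.Tendsto H (nhdsWithin 0 (Set.Ioo 0 ε)) (nhds (H 0)) := by
      have := (hHc 0 ⟨le_refl 0, hε⟩).tendsto
      exact this.mono_left (nhdsWithin_mono 0 fun x hx => ⟨hx.1.le, hx.2⟩)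
    have hHt' : Filter.Tendsto H (nhdsWithin 0 (Set.Ioo 0 ε)) (nhds 0) := by
      refine hΦ.congr' ?_
      filter_upwards [self_mem_nhdsWithin] with x hx
      exact (hHform x hx).symm
    exact tendsto_nhds_unique hHt hHt'
  · -- integral formula
    intro t ht
    have hIcc : Set.Icc (0:ℝ) t ⊆ Set.Ico 0 ε := fun x hx =>
      ⟨hx.1, lt_of_le_of_lt hx.2 ht.2⟩
    have hcont : ContinuousOn f (Set.Icc 0 t) := hf.continuousOn.mono hIcc
    have hderiv : ∀ x ∈ Set.Ioo (0:ℝ) t,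
        HasDerivWithinAt f (derivWithin f (Set.Ici 0) x) (Set.Ioi x) x := by
      intro x hx
      have hxm : Set.Ico (0:ℝ) ε ∈ nhds x := by
        rw [mem_nhds_iff]
        exact ⟨Set.Ioo 0 ε, fun y hy => ⟨hy.1.le, hy.2⟩, isOpen_Ioo,
          ⟨hx.1, lt_of_lt_of_le hx.2 ht.2.le⟩⟩
      have hdiff : DifferentiableAt ℝ f x :=
        ((hf.differentiableOn (by simp)) x ⟨hx.1.le, lt_of_lt_of_le hx.2 ht.2.le⟩).differentiableAt hxm
      have heq : derivWithin f (Set.Ici 0) x = deriv f x :=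
        derivWithin_of_mem_nhds (Ici_mem_nhds hx.1)
      rw [heq]
      exact hdiff.hasDerivAt.hasDerivWithinAt
    have hint : IntervalIntegrable (fun s => derivWithin f (Set.Ici 0) s)
        MeasureTheory.volume 0 t := by
      apply ContinuousOn.intervalIntegrable
      rw [Set.uIcc_of_le ht.1]
      have : ContinuousOn (derivWithin f (Set.Ico 0 ε)) (Set.Icc 0 t) :=
        hfd.continuousOn.mono hIcc
      exact this.congr fun x hx => hdf_eq x (hIcc hx)
    have key := intervalIntegral.integral_eq_sub_of_hasDeriv_right_of_le ht.1 hcont hderiv hint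
    rw [hf0, sub_zero] at key
    rw [← key]
    rw [← intervalIntegral.integral_neg]
    apply intervalIntegral.integral_congr
    intro x _
    simp [hH]
end
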